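/- Let ρ > 1. The area (2-dimensional Lebesgue measure) of the Q cell Q_□(ρ) of the origin in the unit square lattice equals (4ρ²·arctan((√(2ρ²−1) − 1)/(√(2ρ²−1) + 1)) − 2√(2ρ²−1) + 2)/(ρ² − 1)². -/

import Mathlib

open MeasureTheory Real Set

namespace QCellAux

/-- max of |cos|, |sin| -/
noncomputable def Mf (θ : ℝ) : ℝ := max |Real.cos θ| |Real.sin θ|

/-- polar radius of the region -/
noncomputable def Rf (a θ : ℝ) : ℝ := (Real.sqrt (Mf θ ^ 2 + a) - Mf θ) / a

/-- half square of the radius -/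
noncomputable def ψf (a θ : ℝ) : ℝ := Rf a θ ^ 2 / 2

lemma Mf_nonneg (θ : ℝ) : 0 ≤ Mf θ := le_trans (abs_nonneg _) (le_max_left _ _)

lemma Mf_cont : Continuous Mf := (continuous_cos.abs).max (continuous_sin.abs)

lemma Rf_cont (a : ℝ) : Continuous (Rf a) := by
  unfold Rf
  exact (((Mf_cont.pow 2).add continuous_const).sqrt.sub Mf_cont).div_const a

lemma ψf_cont (a : ℝ) : Continuous (ψf a) := ((Rf_cont a).pow 2).div_const 2

lemma ψf_nonneg (a θ : ℝ) : 0 ≤ ψf a θ := by unfold ψf; positivity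

lemma Rf_pos {a : ℝ} (ha : 0 < a) (θ : ℝ) : 0 < Rf a θ := by
  have h1 : Mf θ < Real.sqrt (Mf θ ^ 2 + a) := by
    have : Mf θ = Real.sqrt (Mf θ ^ 2) := (Real.sqrt_sq (Mf_nonneg θ)).symm
    rw [this]
    exact Real.sqrt_lt_sqrt (by positivity) (by nlinarith [Real.sq_sqrt (sq_nonneg (Mf θ))])
  unfold Rf
  exact div_pos (by linarith) ha

lemma Mf_neg (θ : ℝ) : Mf (-θ) = Mf θ := by
  unfold Mf; rw [Real.cos_neg, Real.sin_neg, abs_neg]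

lemma Mf_add_pi_div_two (θ : ℝ) : Mf (θ + π / 2) = Mf θ := by
  unfold Mf; rw [Real.cos_add_pi_div_two, Real.sin_add_pi_div_two, abs_neg, max_comm]

lemma Mf_pi_div_two_sub (θ : ℝ) : Mf (π / 2 - θ) = Mf θ := by
  unfold Mf; rw [Real.cos_pi_div_two_sub, Real.sin_pi_div_two_sub, max_comm]

lemma ψf_neg (a θ : ℝ) : ψf a (-θ) = ψf a θ := by unfold ψf Rf; rw [Mf_neg]

lemma ψf_add_pi_div_two (a θ : ℝ) : ψf a (θ + π / 2) = ψf a θ := by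
  unfold ψf Rf; rw [Mf_add_pi_div_two]

lemma ψf_pi_div_two_sub (a θ : ℝ) : ψf a (π / 2 - θ) = ψf a θ := by
  unfold ψf Rf; rw [Mf_pi_div_two_sub]

lemma Mf_eq_cos {θ : ℝ} (hθ : θ ∈ Icc 0 (π / 4)) : Mf θ = Real.cos θ := by
  obtain ⟨h0, h1⟩ := hθ
  have hπ : π / 4 ≤ π / 2 := by linarith [pi_pos]
  have hc : 0 ≤ Real.cos θ := Real.cos_nonneg_of_mem_Icc ⟨by linarith [pi_pos], by linarith⟩
  have hs : 0 ≤ Real.sin θ := Real.sin_nonneg_of_nonneg_of_le_pi h0 (by linarith [pi_pos])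
  have hsc : Real.sin θ ≤ Real.cos θ := by
    have hss : Real.sqrt 2 * Real.sqrt 2 = 2 := Real.mul_self_sqrt (by norm_num)
    have h2 : Real.cos θ - Real.sin θ = Real.sqrt 2 * Real.cos (θ + π / 4) := by
      rw [Real.cos_add, Real.cos_pi_div_four, Real.sin_pi_div_four]
      linear_combination ((Real.sin θ - Real.cos θ)/2) * hss
    have h3 : 0 ≤ Real.cos (θ + π / 4) :=
      Real.cos_nonneg_of_mem_Icc ⟨by linarith [pi_pos], by linarith⟩
    nlinarith [Real.sqrt_nonneg 2]
  unfold Mf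
  rw [abs_of_nonneg hc, abs_of_nonneg hs, max_eq_left hsc]

/-- Quadratic inequality characterization. -/
lemma quad_iff {a r : ℝ} (ha : 0 < a) (hr : 0 < r) (θ : ℝ) :
    a * r ^ 2 + 2 * r * Mf θ < 1 ↔ r < Rf a θ := by
  set M := Mf θ with hM
  have hM0 : 0 ≤ M := Mf_nonneg θ
  have hq : Real.sqrt (M ^ 2 + a) ^ 2 = M ^ 2 + a := Real.sq_sqrt (by positivity)
  have hqpos : 0 < Real.sqrt (M ^ 2 + a) := Real.sqrt_pos.2 (by positivity)
  have key : a * r ^ 2 + 2 * r * M - 1 =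
      a * (r - Rf a θ) * (r + (Real.sqrt (M ^ 2 + a) + M) / a) := by
    unfold Rf
    rw [← hM]
    field_simp
    nlinarith [hq]
  have h4 : 0 < r + (Real.sqrt (M ^ 2 + a) + M) / a := by positivity
  constructor
  · intro h
    by_contra hc
    push_neg at hc
    have h5 : 0 ≤ r - Rf a θ := by linarith
    have h2 : 0 ≤ a * (r - Rf a θ) * (r + (Real.sqrt (M ^ 2 + a) + M) / a) :=
      mul_nonneg (mul_nonneg ha.le h5) h4.le
    linarith
  · intro h
    have h3 : r - Rf a θ < 0 := by linarith
    have h2 : a * (r - Rf a θ) * (r + (Real.sqrt (M ^ 2 + a) + M) / a) < 0 := by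
      have := mul_pos ha h4
      calc a * (r - Rf a θ) * (r + (Real.sqrt (M ^ 2 + a) + M) / a)
          = (r - Rf a θ) * (a * (r + (Real.sqrt (M ^ 2 + a) + M) / a)) := by ring
        _ < 0 := mul_neg_of_neg_of_pos h3 this
    linarith

/-- Change to polar coordinates for the volume of an open set. -/
lemma volume_eq_polar (U : Set (ℝ × ℝ)) (hU : IsOpen U) :
    volume U = ∫⁻ p in polarCoord.target ∩ ⇑polarCoord.symm ⁻¹' U, ENNReal.ofReal p.1 := by
  have hcont : Continuous (⇑polarCoord.symm : ℝ × ℝ → ℝ × ℝ) := by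
    rw [show (⇑polarCoord.symm : ℝ × ℝ → ℝ × ℝ) = fun p => (p.1 * Real.cos p.2, p.1 * Real.sin p.2)
      from funext polarCoord_symm_apply]
    fun_prop
  set s := polarCoord.target ∩ ⇑polarCoord.symm ⁻¹' U with hs
  have hso : IsOpen s := polarCoord.open_target.inter (hU.preimage hcont)
  set B : ℝ × ℝ → ℝ × ℝ →L[ℝ] ℝ × ℝ := fun p =>
    LinearMap.toContinuousLinearMap (Matrix.toLin (Module.Basis.finTwoProd ℝ) (Module.Basis.finTwoProd ℝ)
      !![Real.cos p.2, -p.1 * Real.sin p.2; Real.sin p.2, p.1 * Real.cos p.2]) with hB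
  have B_det : ∀ p, (B p).det = p.1 := by
    intro p
    conv_rhs => rw [← one_mul p.1, ← Real.cos_sq_add_sin_sq p.2]
    simp only [hB, neg_mul, LinearMap.det_toContinuousLinearMap, LinearMap.det_toLin,
      Matrix.det_fin_two_of, sub_neg_eq_add]
    ring
  have himg : ⇑polarCoord.symm '' s = U ∩ polarCoord.source := by
    apply Subset.antisymm
    · rintro - ⟨p, ⟨hpt, hpU⟩, rfl⟩
      exact ⟨hpU, polarCoord.map_target hpt⟩
    · rintro x ⟨hxU, hxs⟩
      exact ⟨polarCoord x, ⟨polarCoord.map_source hxs,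
        by rwa [mem_preimage, polarCoord.left_inv hxs]⟩, polarCoord.left_inv hxs⟩
  have h1 : ((U ∩ polarCoord.source : Set (ℝ × ℝ)) : Set (ℝ × ℝ)) =ᵐ[volume] (U : Set (ℝ × ℝ)) := by
    have := ae_eq_set_inter (Filter.EventuallyEq.refl _ U) polarCoord_source_ae_eq_univ
    simpa [inter_univ] using this
  calc volume U = volume (U ∩ polarCoord.source) := (measure_congr h1).symm
    _ = volume (⇑polarCoord.symm '' s) := by rw [himg]
    _ = ∫⁻ p in s, ENNReal.ofReal |(B p).det| := by
        refine (lintegral_abs_det_fderiv_eq_addHaar_image volume hso.measurableSet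
          (fun p _ => (hasFDerivAt_polarCoord_symm p : HasFDerivAt _ (B p) p).hasFDerivWithinAt) ?_).symm
        exact polarCoord.symm.injOn.mono inter_subset_left
    _ = ∫⁻ p in s, ENNReal.ofReal p.1 := by
        refine setLIntegral_congr_fun hso.measurableSet ?_
        intro p hp
        dsimp only
        rw [B_det, abs_of_pos hp.1.1]

/-- The planar region. -/
def Ef (a : ℝ) : Set (ℝ × ℝ) :=
  {p : ℝ × ℝ | a * (p.1 ^ 2 + p.2 ^ 2) + 2 * max |p.1| |p.2| < 1}

lemma Ef_open (a : ℝ) : IsOpen (Ef a) := by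
  apply isOpen_lt _ continuous_const
  fun_prop

lemma volume_Ef {a : ℝ} (ha : 0 < a) :
    volume (Ef a) = ENNReal.ofReal (∫ θ in Ioo (-π) π, ψf a θ) := by
  rw [volume_eq_polar (Ef a) (Ef_open a)]
  have hcont : Continuous (⇑polarCoord.symm : ℝ × ℝ → ℝ × ℝ) := by
    rw [show (⇑polarCoord.symm : ℝ × ℝ → ℝ × ℝ) = fun p => (p.1 * Real.cos p.2, p.1 * Real.sin p.2)
      from funext polarCoord_symm_apply]
    fun_prop
  have hpre : MeasurableSet (⇑polarCoord.symm ⁻¹' Ef a) :=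
    ((Ef_open a).preimage hcont).measurableSet
  rw [polarCoord_target, inter_comm, ← Measure.restrict_restrict hpre,
    show ((volume : Measure (ℝ × ℝ)).restrict (Ioi (0:ℝ) ×ˢ Ioo (-π) π))
      = ((volume : Measure ℝ).restrict (Ioi 0)).prod ((volume : Measure ℝ).restrict (Ioo (-π) π))
      from (Measure.prod_restrict _ _).symm,
    ← lintegral_indicator hpre]
  rw [lintegral_prod_symm _ ((measurable_fst.ennreal_ofReal.indicator hpre).aemeasurable)]
  have inner : ∀ θ : ℝ, (∫⁻ r in Ioi (0:ℝ),
      (⇑polarCoord.symm ⁻¹' Ef a).indicator (fun p => ENNReal.ofReal p.1) (r, θ))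
      = ENNReal.ofReal (ψf a θ) := by
    intro θ
    have hA : MeasurableSet {r : ℝ | (r, θ) ∈ ⇑polarCoord.symm ⁻¹' Ef a} :=
      measurable_prodMk_right hpre
    have hind : (fun r : ℝ => (⇑polarCoord.symm ⁻¹' Ef a).indicator
        (fun p => ENNReal.ofReal p.1) (r, θ))
        = fun r : ℝ => ({r : ℝ | (r, θ) ∈ ⇑polarCoord.symm ⁻¹' Ef a}).indicator
        (fun r => ENNReal.ofReal r) r := by
      funext r
      by_cases h : (r, θ) ∈ ⇑polarCoord.symm ⁻¹' Ef a
      · rw [indicator_of_mem h]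
        exact (indicator_of_mem (show r ∈ {r : ℝ | (r, θ) ∈ ⇑polarCoord.symm ⁻¹' Ef a} from h) _).symm
      · rw [indicator_of_notMem h]
        exact (indicator_of_notMem (show r ∉ {r : ℝ | (r, θ) ∈ ⇑polarCoord.symm ⁻¹' Ef a} from h) _).symm
    rw [hind, lintegral_indicator hA, Measure.restrict_restrict hA]
    have hset : {r : ℝ | (r, θ) ∈ ⇑polarCoord.symm ⁻¹' Ef a} ∩ Ioi 0 = Ioo 0 (Rf a θ) := by
      ext r
      simp only [mem_inter_iff, mem_setOf_eq, mem_preimage, mem_Ioi, mem_Ioo,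
        polarCoord_symm_apply, Ef]
      constructor
      · rintro ⟨hE, hr⟩
        refine ⟨hr, ?_⟩
        rw [← quad_iff ha hr θ]
        have h1 : (r * Real.cos θ) ^ 2 + (r * Real.sin θ) ^ 2 = r ^ 2 := by
          have := Real.sin_sq_add_cos_sq θ; nlinarith
        have h2 : max |r * Real.cos θ| |r * Real.sin θ| = r * Mf θ := by
          rw [abs_mul, abs_mul, abs_of_pos hr, ← mul_max_of_nonneg _ _ hr.le]
          rfl
        calc a * r ^ 2 + 2 * r * Mf θ
            = a * ((r * Real.cos θ) ^ 2 + (r * Real.sin θ) ^ 2)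
              + 2 * max |r * Real.cos θ| |r * Real.sin θ| := by rw [h1, h2]; ring
          _ < 1 := hE
      · rintro ⟨hr, hR⟩
        refine ⟨?_, hr⟩
        have h3 := (quad_iff ha hr θ).2 hR
        have h1 : (r * Real.cos θ) ^ 2 + (r * Real.sin θ) ^ 2 = r ^ 2 := by
          have := Real.sin_sq_add_cos_sq θ; nlinarith
        have h2 : max |r * Real.cos θ| |r * Real.sin θ| = r * Mf θ := by
          rw [abs_mul, abs_mul, abs_of_pos hr, ← mul_max_of_nonneg _ _ hr.le]
          rfl
        calc a * ((r * Real.cos θ) ^ 2 + (r * Real.sin θ) ^ 2)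
              + 2 * max |r * Real.cos θ| |r * Real.sin θ|
            = a * r ^ 2 + 2 * r * Mf θ := by rw [h1, h2]; ring
          _ < 1 := h3
    rw [hset]
    have hR0 : 0 < Rf a θ := Rf_pos ha θ
    have hInt : IntegrableOn (fun r : ℝ => r) (Ioo 0 (Rf a θ)) volume :=
      (continuous_id.integrableOn_Icc).mono_set Ioo_subset_Icc_self
    rw [← ofReal_integral_eq_lintegral_ofReal hInt
      (Filter.Eventually.mono (ae_restrict_mem measurableSet_Ioo) (fun r hr => hr.1.le))]
    congr 1
    rw [← integral_Ioc_eq_integral_Ioo, ← intervalIntegral.integral_of_le hR0.le, integral_id]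
    unfold ψf; ring
  calc (∫⁻ θ in Ioo (-π) π, ∫⁻ r in Ioi (0:ℝ),
      (⇑polarCoord.symm ⁻¹' Ef a).indicator (fun p => ENNReal.ofReal p.1) (r, θ))
      = ∫⁻ θ in Ioo (-π) π, ENNReal.ofReal (ψf a θ) := by
        apply lintegral_congr
        intro θ
        exact inner θ
    _ = ENNReal.ofReal (∫ θ in Ioo (-π) π, ψf a θ) := by
        refine (ofReal_integral_eq_lintegral_ofReal ?_
          (Filter.Eventually.of_forall (fun θ => ψf_nonneg a θ))).symm
        exact ((ψf_cont a).integrableOn_Icc).mono_set Ioo_subset_Icc_self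

/-- Symmetry reduction of the angular integral. -/
lemma integral_sym {a : ℝ} :
    ∫ θ in (-π)..π, ψf a θ = 8 * ∫ θ in (0:ℝ)..(π/4), ψf a θ := by
  have hint : ∀ u v : ℝ, IntervalIntegrable (ψf a) volume u v :=
    fun u v => ((ψf_cont a)).intervalIntegrable u v
  have e1 : ∫ θ in (-π)..(0:ℝ), ψf a θ = ∫ θ in (0:ℝ)..π, ψf a θ := by
    have h := intervalIntegral.integral_comp_neg (a := 0) (b := π) (ψf a)
    rw [neg_zero] at h
    rw [← h]
    apply intervalIntegral.integral_congr
    intro x _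
    exact ψf_neg a x
  have e2 : ∫ θ in (π/2)..π, ψf a θ = ∫ θ in (0:ℝ)..(π/2), ψf a θ := by
    have h := intervalIntegral.integral_comp_add_right (a := 0) (b := π/2) (ψf a) (π/2)
    rw [zero_add, show π/2 + π/2 = π by ring] at h
    rw [← h]
    apply intervalIntegral.integral_congr
    intro x _
    exact ψf_add_pi_div_two a x
  have e3 : ∫ θ in (π/4)..(π/2), ψf a θ = ∫ θ in (0:ℝ)..(π/4), ψf a θ := by
    have h := intervalIntegral.integral_comp_sub_left (a := 0) (b := π/4) (ψf a) (π/2)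
    rw [sub_zero, show π/2 - π/4 = π/4 by ring] at h
    rw [← h]
    apply intervalIntegral.integral_congr
    intro x _
    exact ψf_pi_div_two_sub a x
  have s1 : ∫ θ in (-π)..π, ψf a θ = (∫ θ in (-π)..(0:ℝ), ψf a θ) + ∫ θ in (0:ℝ)..π, ψf a θ :=
    (intervalIntegral.integral_add_adjacent_intervals (hint _ _) (hint _ _)).symm
  have s2 : ∫ θ in (0:ℝ)..π, ψf a θ = (∫ θ in (0:ℝ)..(π/2), ψf a θ) + ∫ θ in (π/2)..π, ψf a θ :=
    (intervalIntegral.integral_add_adjacent_intervals (hint _ _) (hint _ _)).symm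
  have s3 : ∫ θ in (0:ℝ)..(π/2), ψf a θ
      = (∫ θ in (0:ℝ)..(π/4), ψf a θ) + ∫ θ in (π/4)..(π/2), ψf a θ :=
    (intervalIntegral.integral_add_adjacent_intervals (hint _ _) (hint _ _)).symm
  rw [s1, e1, s2, e2, s3, e3]
  ring

/-- Antiderivative. -/
noncomputable def Gf (a θ : ℝ) : ℝ :=
  ((a+1) * θ + Real.sin θ * Real.cos θ - Real.sin θ * Real.sqrt (a + 1 - Real.sin θ ^ 2)
    - (a+1) * Real.arcsin (Real.sin θ / Real.sqrt (a+1))) / (2 * a ^ 2)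

lemma hasDerivAt_Gf {a : ℝ} (ha : 0 < a) {θ : ℝ} (hθ : θ ∈ Icc 0 (π/4)) :
    HasDerivAt (Gf a) (ψf a θ) θ := by
  have hb : (0:ℝ) < a + 1 := by linarith
  have hsin2 : Real.sin θ ^ 2 ≤ 1 := by
    nlinarith [Real.sin_sq_add_cos_sq θ, sq_nonneg (Real.cos θ)]
  have hq2pos : 0 < a + 1 - Real.sin θ ^ 2 := by linarith
  set q := Real.sqrt (a + 1 - Real.sin θ ^ 2) with hqdef
  have hq : q ^ 2 = a + 1 - Real.sin θ ^ 2 := Real.sq_sqrt hq2pos.le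
  have hqpos : 0 < q := Real.sqrt_pos.2 hq2pos
  have hbr : Real.sqrt (a+1) ^ 2 = a + 1 := Real.sq_sqrt hb.le
  have hbrpos : 0 < Real.sqrt (a+1) := Real.sqrt_pos.2 hb
  -- derivative of sin θ / √(a+1)
  have habs : |Real.sin θ / Real.sqrt (a+1)| < 1 := by
    rw [abs_div, abs_of_pos hbrpos, div_lt_one hbrpos]
    have h1 : |Real.sin θ| ^ 2 < Real.sqrt (a+1) ^ 2 := by
      rw [sq_abs, hbr]; nlinarith
    nlinarith [abs_nonneg (Real.sin θ)]
  have h1 : HasDerivAt (fun θ : ℝ => (a+1) * θ) (a+1) θ := by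
    simpa using (hasDerivAt_id θ).const_mul (a+1)
  have h2 : HasDerivAt (fun θ : ℝ => Real.sin θ * Real.cos θ)
      (Real.cos θ * Real.cos θ + Real.sin θ * (-Real.sin θ)) θ :=
    (Real.hasDerivAt_sin θ).mul (Real.hasDerivAt_cos θ)
  have h3i : HasDerivAt (fun θ : ℝ => a + 1 - Real.sin θ ^ 2)
      (-(2 * Real.sin θ ^ 1 * Real.cos θ)) θ := by
    simpa using (((Real.hasDerivAt_sin θ).pow 2)).const_sub (a+1)
  have h3s : HasDerivAt (fun θ : ℝ => Real.sqrt (a + 1 - Real.sin θ ^ 2))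
      ((-(2 * Real.sin θ ^ 1 * Real.cos θ)) / (2 * q)) θ :=
    h3i.sqrt (by rw [← hqdef] at *; nlinarith)
  have h3 : HasDerivAt (fun θ : ℝ => Real.sin θ * Real.sqrt (a + 1 - Real.sin θ ^ 2))
      (Real.cos θ * q + Real.sin θ * ((-(2 * Real.sin θ ^ 1 * Real.cos θ)) / (2 * q))) θ :=
    (Real.hasDerivAt_sin θ).mul h3s
  have h4i : HasDerivAt (fun θ : ℝ => Real.sin θ / Real.sqrt (a+1))
      (Real.cos θ / Real.sqrt (a+1)) θ := (Real.hasDerivAt_sin θ).div_const _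
  have h4 : HasDerivAt (fun θ : ℝ => Real.arcsin (Real.sin θ / Real.sqrt (a+1)))
      ((1 / Real.sqrt (1 - (Real.sin θ / Real.sqrt (a+1)) ^ 2))
        * (Real.cos θ / Real.sqrt (a+1))) θ := by
    have := (Real.hasDerivAt_arcsin (by intro h; rw [h] at habs; simp at habs)
      (by intro h; rw [h] at habs; simp at habs)).comp θ h4i
    simpa [Function.comp_def] using this
  have hD : HasDerivAt (Gf a)
      (((a+1) + (Real.cos θ * Real.cos θ + Real.sin θ * (-Real.sin θ))
        - (Real.cos θ * q + Real.sin θ * ((-(2 * Real.sin θ ^ 1 * Real.cos θ)) / (2 * q)))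
        - (a+1) * ((1 / Real.sqrt (1 - (Real.sin θ / Real.sqrt (a+1)) ^ 2))
          * (Real.cos θ / Real.sqrt (a+1)))) / (2 * a ^ 2)) θ := by
    exact (((h1.add h2).sub h3).sub (h4.const_mul (a+1))).div_const (2 * a ^ 2)
  convert hD using 1
  -- now prove the derivative value equals ψf a θ
  have hroot : Real.sqrt (1 - (Real.sin θ / Real.sqrt (a+1)) ^ 2) = q / Real.sqrt (a+1) := by
    rw [div_pow, hbr, hqdef]
    rw [show 1 - Real.sin θ ^ 2 / (a+1) = (a + 1 - Real.sin θ ^ 2) / (a+1) by field_simp]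
    rw [Real.sqrt_div hq2pos.le]
  have hMc : Mf θ = Real.cos θ := Mf_eq_cos hθ
  have hcos2 : Real.cos θ ^ 2 = 1 - Real.sin θ ^ 2 := by
    nlinarith [Real.sin_sq_add_cos_sq θ]
  have hsq : Real.sqrt (Mf θ ^ 2 + a) = q := by
    rw [hMc, hqdef]
    congr 1
    linarith
  unfold ψf Rf
  rw [hsq, hMc, hroot]
  have hbne : Real.sqrt (a+1) ≠ 0 := ne_of_gt hbrpos
  have hqne : q ≠ 0 := ne_of_gt hqpos
  have hane : a ≠ 0 := ne_of_gt ha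
  field_simp
  linear_combination (q - Real.cos θ) * hq

lemma Gf_zero (a : ℝ) : Gf a 0 = 0 := by
  unfold Gf
  simp

lemma integral_octant {a : ℝ} (ha : 0 < a) :
    ∫ θ in (0:ℝ)..(π/4), ψf a θ = Gf a (π/4) := by
  have h := intervalIntegral.integral_eq_sub_of_hasDerivAt
    (f := Gf a) (f' := ψf a) (a := 0) (b := π/4)
    (fun θ hθ => hasDerivAt_Gf ha (by
      rwa [uIcc_of_le (by positivity : (0:ℝ) ≤ π/4)] at hθ))
    ((ψf_cont a).intervalIntegrable 0 (π/4))
  rw [h, Gf_zero, sub_zero]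


/-- Squared form of the defining condition. -/
lemma abs_cond_iff {ρ : ℝ} (hρ0 : 0 ≤ ρ) (w : ℂ) (m n : ℤ) :
    (‖w - ((m : ℂ) + (n : ℂ) * Complex.I)‖ > ρ * ‖w‖) ↔
      (ρ^2 - 1) * (w.re^2 + w.im^2) + 2*((m:ℝ)*w.re + (n:ℝ)*w.im) - ((m:ℝ)^2+(n:ℝ)^2) < 0 := by
  have h1 : ‖w - ((m : ℂ) + (n : ℂ) * Complex.I)‖^2
      = (w.re - (m:ℝ))^2 + (w.im - (n:ℝ))^2 := by
    rw [Complex.sq_norm, Complex.normSq_apply]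
    simp [Complex.sub_re, Complex.sub_im, Complex.add_re, Complex.add_im,
      Complex.mul_re, Complex.mul_im]
    ring
  have h2 : (ρ * ‖w‖)^2 = ρ^2 * (w.re^2 + w.im^2) := by
    rw [mul_pow, Complex.sq_norm, Complex.normSq_apply]; ring
  constructor
  · intro h
    have h0 : 0 ≤ ρ * ‖w‖ := mul_nonneg hρ0 (norm_nonneg _)
    have h3 : (ρ * ‖w‖)^2 < ‖w - ((m : ℂ) + (n : ℂ) * Complex.I)‖^2 := by
      nlinarith [h, h0]
    rw [h1, h2] at h3
    nlinarith
  · intro h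
    have h3 : (ρ * ‖w‖)^2 < ‖w - ((m : ℂ) + (n : ℂ) * Complex.I)‖^2 := by
      rw [h1, h2]; nlinarith
    exact lt_of_pow_lt_pow_left₀ 2 (norm_nonneg _) h3

lemma set_eq {ρ : ℝ} (hρ : 1 < ρ) :
    {w : ℂ | ∀ m n : ℤ, (m, n) ≠ (0, 0) →
        ‖w - ((m : ℂ) + (n : ℂ) * Complex.I)‖ > ρ * ‖w‖}
      = ⇑Complex.measurableEquivRealProd ⁻¹' Ef (ρ^2 - 1) := by
  have ha : (0:ℝ) < ρ^2 - 1 := by nlinarith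
  ext w
  have happ : Complex.measurableEquivRealProd w = (w.re, w.im) := rfl
  simp only [mem_setOf_eq, mem_preimage, happ, Ef]
  constructor
  · intro h
    have hρ0 : (0:ℝ) ≤ ρ := by linarith
    have h10 := (abs_cond_iff hρ0 w 1 0).1 (h 1 0 (by simp))
    have h20 := (abs_cond_iff hρ0 w (-1) 0).1 (h (-1) 0 (by simp))
    have h01 := (abs_cond_iff hρ0 w 0 1).1 (h 0 1 (by simp))
    have h02 := (abs_cond_iff hρ0 w 0 (-1)).1 (h 0 (-1) (by simp))
    push_cast at h10 h20 h01 h02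
    have hx : 2 * |w.re| < 1 - (ρ^2-1) * (w.re^2 + w.im^2) := by
      rcases abs_cases w.re with ⟨h', _⟩ | ⟨h', _⟩ <;> rw [h'] <;> linarith
    have hy : 2 * |w.im| < 1 - (ρ^2-1) * (w.re^2 + w.im^2) := by
      rcases abs_cases w.im with ⟨h', _⟩ | ⟨h', _⟩ <;> rw [h'] <;> linarith
    rcases max_cases |w.re| |w.im| with ⟨h', _⟩ | ⟨h', _⟩ <;> rw [h'] <;> linarith
  · intro hE m n hmn
    rw [abs_cond_iff (by linarith : (0:ℝ) ≤ ρ)]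
    have hmn' : m ≠ 0 ∨ n ≠ 0 := by
      by_contra hc
      push_neg at hc
      exact hmn (by rw [hc.1, hc.2])
    have hm2 : (1:ℝ) ≤ (m:ℝ)^2 + (n:ℝ)^2 := by
      have : (1:ℤ) ≤ m^2 + n^2 := by
        rcases hmn' with h' | h'
        · nlinarith [sq_nonneg n, Int.one_le_abs h', sq_abs m, abs_nonneg m]
        · nlinarith [sq_nonneg m, Int.one_le_abs h', sq_abs n, abs_nonneg n]
      exact_mod_cast this
    have habsm : |(m:ℝ)| ≤ (m:ℝ)^2 := by
      have : |m| ≤ m^2 := by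
        rcases eq_or_ne m 0 with rfl | h'
        · simp
        · nlinarith [Int.one_le_abs h', sq_abs m]
      calc |(m:ℝ)| = ((|m| : ℤ) : ℝ) := by push_cast; ring
        _ ≤ ((m^2 : ℤ) : ℝ) := by exact_mod_cast this
        _ = (m:ℝ)^2 := by push_cast; ring
    have habsn : |(n:ℝ)| ≤ (n:ℝ)^2 := by
      have : |n| ≤ n^2 := by
        rcases eq_or_ne n 0 with rfl | h'
        · simp
        · nlinarith [Int.one_le_abs h', sq_abs n]
      calc |(n:ℝ)| = ((|n| : ℤ) : ℝ) := by push_cast; ring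
        _ ≤ ((n^2 : ℤ) : ℝ) := by exact_mod_cast this
        _ = (n:ℝ)^2 := by push_cast; ring
    set M := max |w.re| |w.im| with hM
    have hM0 : 0 ≤ M := le_trans (abs_nonneg _) (le_max_left _ _)
    have hkey : (m:ℝ)*w.re + (n:ℝ)*w.im ≤ ((m:ℝ)^2 + (n:ℝ)^2) * M := by
      have e1 : (m:ℝ)*w.re ≤ |(m:ℝ)| * M := by
        refine le_trans (le_abs_self _) ?_
        rw [abs_mul]
        exact mul_le_mul_of_nonneg_left (le_max_left _ _) (abs_nonneg _)
      have e2 : (n:ℝ)*w.im ≤ |(n:ℝ)| * M := by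
        refine le_trans (le_abs_self _) ?_
        rw [abs_mul]
        exact mul_le_mul_of_nonneg_left (le_max_right _ _) (abs_nonneg _)
      have e3 : |(m:ℝ)| * M ≤ (m:ℝ)^2 * M := mul_le_mul_of_nonneg_right habsm hM0
      have e4 : |(n:ℝ)| * M ≤ (n:ℝ)^2 * M := mul_le_mul_of_nonneg_right habsn hM0
      nlinarith [e1, e2, e3, e4]
    have hr2 : 0 ≤ w.re^2 + w.im^2 := by positivity
    have h5 : ((m:ℝ)^2+(n:ℝ)^2) * ((ρ^2-1)*(w.re^2+w.im^2) + 2*M - 1) < 0 :=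
      mul_neg_of_pos_of_neg (by linarith) (by linarith)
    have h6 : (ρ^2-1)*(w.re^2+w.im^2) ≤ ((m:ℝ)^2+(n:ℝ)^2) * ((ρ^2-1)*(w.re^2+w.im^2)) :=
      le_mul_of_one_le_left (by positivity) hm2
    nlinarith [h5, h6, hkey]

lemma sqrt_two_facts : Real.sqrt 2 * Real.sqrt 2 = 2 ∧ (0:ℝ) < Real.sqrt 2 ∧ Real.sqrt 2 < 2 := by
  have h1 : Real.sqrt 2 * Real.sqrt 2 = 2 := Real.mul_self_sqrt (by norm_num)
  have h2 : (0:ℝ) < Real.sqrt 2 := Real.sqrt_pos.2 (by norm_num)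
  exact ⟨h1, h2, by nlinarith⟩

/-- The key arctan/arcsin identity. -/
lemma arcsin_arctan {ρ : ℝ} (hρ : 1 < ρ) :
    Real.arcsin (Real.sqrt 2 / 2 / ρ) =
      π/4 - Real.arctan ((Real.sqrt (2*ρ^2-1) - 1) / (Real.sqrt (2*ρ^2-1) + 1)) := by
  obtain ⟨hss, hs2pos, hs2lt⟩ := sqrt_two_facts
  have hρ0 : (0:ℝ) < ρ := by linarith
  set s := Real.sqrt (2*ρ^2-1) with hsdef
  have hs2 : s^2 = 2*ρ^2-1 := Real.sq_sqrt (by nlinarith)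
  have hs1 : 1 < s := by
    have : Real.sqrt 1 < s := Real.sqrt_lt_sqrt (by norm_num) (by nlinarith)
    rwa [Real.sqrt_one] at this
  -- step 1 : arcsin (√2/2/ρ) = arctan (1/s)
  have harg : Real.sqrt 2 / 2 / ρ ∈ Ioo (-1:ℝ) 1 := by
    constructor
    · have : 0 < Real.sqrt 2 / 2 / ρ := by positivity
      linarith
    · rw [div_lt_one hρ0]; nlinarith
  have hstep1 : Real.arcsin (Real.sqrt 2 / 2 / ρ) = Real.arctan (1/s) := by
    rw [Real.arcsin_eq_arctan harg]
    congr 1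
    have hsq2 : (Real.sqrt 2)^2 = 2 := Real.sq_sqrt (by norm_num)
    have e0 : (Real.sqrt 2 / 2 / ρ)^2 = 1/(2*ρ^2) := by
      rw [div_pow, div_pow, hsq2]
      field_simp
    have e1 : 1 - (Real.sqrt 2 / 2 / ρ)^2 = (2*ρ^2-1)/(2*ρ^2) := by
      rw [e0]
      field_simp
    rw [e1, Real.sqrt_div (by nlinarith) (2*ρ^2),
      show (2:ℝ)*ρ^2 = 2 * ρ^2 from rfl]
    have e2 : Real.sqrt (2*ρ^2) = Real.sqrt 2 * ρ := by
      rw [Real.sqrt_mul (by norm_num), Real.sqrt_sq hρ0.le]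
    rw [e2, ← hsdef]
    have hspos : 0 < s := by linarith
    field_simp
    ring_nf
    rw [hsq2]
  -- step 2 : arctan ((s-1)/(s+1)) + arctan (1/s) = π/4
  have hstep2 : Real.arctan ((s-1)/(s+1)) + Real.arctan (1/s) = π/4 := by
    have hspos : 0 < s := by linarith
    have hcond : (s-1)/(s+1) * (1/s) < 1 := by
      rw [div_mul_div_comm]
      rw [div_lt_one (by nlinarith)]
      nlinarith
    rw [Real.arctan_add hcond]
    have hne : 1 - (s-1)/(s+1) * (1/s) ≠ 0 := (sub_pos.2 hcond).ne'
    have heq : (s-1)/(s+1) + 1/s = 1 - (s-1)/(s+1) * (1/s) := by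
      have h1 : s + 1 ≠ 0 := by positivity
      have h2 : s ≠ 0 := by positivity
      field_simp
      ring
    rw [heq, div_self hne, Real.arctan_one]
  linarith [hstep1, hstep2]

/-- Value of the octant integral. -/
lemma value_eq {ρ : ℝ} (hρ : 1 < ρ) :
    8 * Gf (ρ^2 - 1) (π/4) =
      (4 * ρ ^ 2 * Real.arctan ((Real.sqrt (2 * ρ ^ 2 - 1) - 1) / (Real.sqrt (2 * ρ ^ 2 - 1) + 1))
        - 2 * Real.sqrt (2 * ρ ^ 2 - 1) + 2) / (ρ ^ 2 - 1) ^ 2 := by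
  obtain ⟨hss, hs2pos, hs2lt⟩ := sqrt_two_facts
  have hρ0 : (0:ℝ) < ρ := by linarith
  have ha : (0:ℝ) < ρ^2 - 1 := by nlinarith
  set s := Real.sqrt (2*ρ^2-1) with hsdef
  have hs2 : s^2 = 2*ρ^2-1 := Real.sq_sqrt (by nlinarith)
  have hspos : 0 < s := Real.sqrt_pos.2 (by nlinarith)
  unfold Gf
  rw [Real.sin_pi_div_four, Real.cos_pi_div_four]
  have hb : ρ^2 - 1 + 1 = ρ^2 := by ring
  have e0 : Real.sqrt 2 / 2 * (Real.sqrt 2 / 2) = 1/2 := by nlinarith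
  have e1 : ρ^2 - 1 + 1 - (Real.sqrt 2 / 2)^2 = (2*ρ^2-1)/2 := by
    rw [div_pow]; nlinarith
  have e2 : Real.sqrt ((2*ρ^2-1)/2) = s / Real.sqrt 2 := Real.sqrt_div (by nlinarith) 2
  have e3 : Real.sqrt 2 / 2 * (s / Real.sqrt 2) = s/2 := by
    field_simp
  have e4 : Real.sqrt (ρ^2 - 1 + 1) = ρ := by rw [hb]; exact Real.sqrt_sq hρ0.le
  rw [e1, e2, e3, e4, hb]
  rw [show Real.sqrt 2 / 2 / ρ = Real.sqrt 2 / 2 / ρ from rfl]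
  rw [arcsin_arctan hρ, ← hsdef]
  field_simp
  linear_combination 32 * hss

end QCellAux

open QCellAux

/-- Area of the Q cell of the origin in the unit square lattice:
`(4ρ²·arctan((√(2ρ²−1) − 1)/(√(2ρ²−1) + 1)) − 2√(2ρ²−1) + 2)/(ρ² − 1)²`. -/
theorem stmt_14 (ρ : ℝ) (hρ : 1 < ρ) :
    volume {w : ℂ | ∀ m n : ℤ, (m, n) ≠ (0, 0) →
        ‖w - ((m : ℂ) + (n : ℂ) * Complex.I)‖ > ρ * ‖w‖} =
      ENNReal.ofReal
        ((4 * ρ ^ 2 * Real.arctan ((Real.sqrt (2 * ρ ^ 2 - 1) - 1) / (Real.sqrt (2 * ρ ^ 2 - 1) + 1))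
            - 2 * Real.sqrt (2 * ρ ^ 2 - 1) + 2) / (ρ ^ 2 - 1) ^ 2) := by
  have ha : (0:ℝ) < ρ^2 - 1 := by nlinarith
  rw [set_eq hρ]
  rw [Complex.volume_preserving_equiv_real_prod.measure_preimage
    (Ef_open (ρ^2-1)).measurableSet.nullMeasurableSet]
  rw [volume_Ef ha]
  congr 1
  have hle : -π ≤ π := by linarith [pi_pos]
  calc ∫ θ in Ioo (-π) π, ψf (ρ^2-1) θ
      = ∫ θ in (-π)..π, ψf (ρ^2-1) θ := by
        rw [intervalIntegral.integral_of_le hle, integral_Ioc_eq_integral_Ioo]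
    _ = 8 * ∫ θ in (0:ℝ)..(π/4), ψf (ρ^2-1) θ := integral_sym
    _ = 8 * Gf (ρ^2-1) (π/4) := by rw [integral_octant ha]
    _ = _ := value_eq hρ
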